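/- Let G = (X ∪ Y, E) be a bipartite graph with |N(X)| ≥ |X| ≥ 1. If M is a maximum matching, X₀ the M-unmatched vertices of X, and X_S the vertices of X reachable from X₀ by M-alternating paths, then X \ X_S is nonempty. -/

import Mathlib

/-- `M` is a matching contained in the edge relation `E` of a bipartite graph. -/
def IsMatching {X Y : Type} (E M : X → Y → Prop) : Prop :=
  (∀ x y, M x y → E x y) ∧
  (∀ x y y', M x y → M x y' → y = y') ∧
  (∀ x x' y, M x y → M x' y → x = x')

/-- `X`-vertices reachable from `M`-unmatched `X`-vertices by `M`-alternating paths. -/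
inductive AltReach {X Y : Type} (E M : X → Y → Prop) : X → Prop
  | base (x : X) (h : ¬ ∃ y, M x y) : AltReach E M x
  | step (x x' : X) (y : Y) (hx : AltReach E M x) (he : E x y) (hm : M x' y) :
      AltReach E M x'

/-- Alternating reachability with an explicit path. -/
inductive APath {X Y : Type} (E M : X → Y → Prop) : List (X × Y) → X → Prop
  | base (x : X) (h : ¬ ∃ y, M x y) : APath E M [] x
  | step (l : List (X × Y)) (x x' : X) (y : Y) (hp : APath E M l x) (he : E x y)
      (hm : M x' y) : APath E M ((x, y) :: l) x'

lemma reach_path {X Y : Type} {E M : X → Y → Prop} {x : X} (h : AltReach E M x) :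
    ∃ l, APath E M l x := by
  induction h with
  | base x h => exact ⟨[], .base x h⟩
  | step x x' y hx he hm ih =>
      obtain ⟨l, hl⟩ := ih
      exact ⟨(x, y) :: l, .step l x x' y hl he hm⟩

lemma apath_cut {X Y : Type} {E M : X → Y → Prop} {l : List (X × Y)} {c : X}
    (h : APath E M l c) {xe : X} {y₀ : Y} (hmem : (xe, y₀) ∈ l) {x'' : X}
    (huniq : ∀ a, M a y₀ → a = x'') :
    ∃ t, APath E M ((xe, y₀) :: t) x'' ∧ t.length < l.length := by
  induction h with
  | base x h => simp at hmem
  | step l x x' y hp he hm ih =>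
      rcases List.mem_cons.1 hmem with heq | hmem'
      · injection heq with h1 h2
        subst h1; subst h2
        have hx : x' = x'' := huniq x' hm
        subst hx
        exact ⟨l, .step l xe x' y₀ hp he hm, by simp⟩
      · obtain ⟨t, ht, hlen⟩ := ih hmem'
        exact ⟨t, ht, by simpa using Nat.lt_succ_of_lt hlen⟩

lemma apath_mod {X Y : Type} (E M : X → Y → Prop) (xr : X) (yr ya : Y)
    (hxr : ∃ c, M xr c) {l : List (X × Y)} {c : X} (h : APath E M l c)
    (hl : ∀ p ∈ l, p.2 ≠ yr) :
    APath E (fun a b => (M a b ∧ ¬(a = xr ∧ b = yr)) ∨ (a = xr ∧ b = ya)) l c := by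
  induction h with
  | base x h =>
      refine .base x ?_
      rintro ⟨b, hb | ⟨hax, hby⟩⟩
      · exact h ⟨b, hb.1⟩
      · exact h (hax ▸ hxr)
  | step l x x' y hp he hm ih =>
      refine .step l x x' y (ih fun p hp => hl p (List.mem_cons_of_mem _ hp)) he ?_
      have hy : y ≠ yr := hl (x, y) List.mem_cons_self
      exact Or.inl ⟨hm, fun hc => hy hc.2⟩

lemma no_reach {X Y : Type} {E M : X → Y → Prop} (hall : ∀ x, ∃ y, M x y) (x : X) :
    ¬ AltReach E M x := by
  intro hr
  induction hr with
  | base x h => exact h (hall x)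
  | step x x' y hx he hm ih => exact ih

lemma card_matching {X Y : Type} [Fintype X] [Fintype Y] (E M : X → Y → Prop)
    (hM : IsMatching E M) :
    Nat.card {p : X × Y // M p.1 p.2} = Nat.card {y : Y // ∃ x, M x y} := by
  apply Nat.card_eq_of_bijective (fun p => ⟨p.1.2, p.1.1, p.2⟩)
  constructor
  · rintro ⟨⟨x, y⟩, h⟩ ⟨⟨x', y'⟩, h'⟩ heq
    have hy : y = y' := congrArg Subtype.val heq
    subst hy
    have hx : x = x' := hM.2.2 x x' y h h'
    subst hx; rfl
  · rintro ⟨y, x, h⟩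
    exact ⟨⟨(x, y), h⟩, rfl⟩

/-- Augmenting path lemma: an alternating path ending at `x` with an `E`-edge to an
unmatched `y` yields a matching whose matched `Y`-set gains `y`. -/
lemma aug {X Y : Type} (E : X → Y → Prop) :
    ∀ n (M : X → Y → Prop) (l : List (X × Y)) (x : X) (y : Y),
      IsMatching E M → APath E M l x → l.length ≤ n → E x y → (¬ ∃ a, M a y) →
      ∃ M' : X → Y → Prop, IsMatching E M' ∧
        {b | ∃ a, M' a b} = insert y {b | ∃ a, M a b} := by
  intro n
  induction n using Nat.strong_induction_on with
  | _ n ih =>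
    intro M l x y hM hp hlen he hy
    classical
    cases hp with
    | base xd hz =>
        refine ⟨fun a b => M a b ∨ (a = x ∧ b = y), ⟨?_, ?_, ?_⟩, ?_⟩
        · rintro a b (h | ⟨ha, hb⟩)
          · exact hM.1 a b h
          · exact ha ▸ hb ▸ he
        · rintro a b b' (h | ⟨ha, hb⟩) (h' | ⟨ha', hb'⟩)
          · exact hM.2.1 a b b' h h'
          · exact absurd ⟨b, ha' ▸ h⟩ hz
          · exact absurd ⟨b', ha ▸ h'⟩ hz
          · exact hb.trans hb'.symm
        · rintro a a' b (h | ⟨ha, hb⟩) (h' | ⟨ha', hb'⟩)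
          · exact hM.2.2 a a' b h h'
          · exact absurd ⟨a, hb' ▸ h⟩ hy
          · exact absurd ⟨a', hb ▸ h'⟩ hy
          · exact ha.trans ha'.symm
        · ext b
          simp only [Set.mem_setOf_eq, Set.mem_insert_iff]
          constructor
          · rintro ⟨a, h | ⟨ha, hb⟩⟩
            · exact Or.inr ⟨a, h⟩
            · exact Or.inl hb
          · rintro (rfl | ⟨a, h⟩)
            · exact ⟨x, Or.inr ⟨rfl, rfl⟩⟩
            · exact ⟨a, Or.inl h⟩
    | step l' x₁ xd y₀ hp' he₀ hm₀ =>
        -- endpoint is x, M x y₀, E x₁ y₀, APath l' x₁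
        have hyy₀ : y ≠ y₀ := fun h => hy ⟨x, h ▸ hm₀⟩
        have hy₀uniq : ∀ a, M a y₀ → a = x := fun a h => hM.2.2 a x y₀ h hm₀
        by_cases hocc : ∃ p ∈ l', p.2 = y₀
        · obtain ⟨⟨xe, yy⟩, hmem, hyy⟩ := hocc
          simp only at hyy
          subst hyy
          obtain ⟨t, ht, hlt⟩ := apath_cut hp' hmem hy₀uniq
          have hlt' : ((xe, yy) :: t).length < n := by
            simp only [List.length_cons] at *
            omega
          exact ih ((xe, yy) :: t).length hlt' M ((xe, yy) :: t) x y hM ht le_rfl he hy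
        · push_neg at hocc
          set M₀ : X → Y → Prop :=
            fun a b => (M a b ∧ ¬(a = x ∧ b = y₀)) ∨ (a = x ∧ b = y) with hM₀def
          have hM₀ : IsMatching E M₀ := by
            refine ⟨?_, ?_, ?_⟩
            · rintro a b (h | ⟨ha, hb⟩)
              · exact hM.1 a b h.1
              · exact ha ▸ hb ▸ he
            · rintro a b b' (⟨h, hne⟩ | ⟨ha, hb⟩) (⟨h', hne'⟩ | ⟨ha', hb'⟩)
              · exact hM.2.1 a b b' h h'
              · exact absurd ⟨ha', hM.2.1 a b y₀ h (ha' ▸ hm₀)⟩ hne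
              · exact absurd ⟨ha, hM.2.1 a b' y₀ h' (ha ▸ hm₀)⟩ hne'
              · exact hb.trans hb'.symm
            · rintro a a' b (⟨h, _⟩ | ⟨ha, hb⟩) (⟨h', _⟩ | ⟨ha', hb'⟩)
              · exact hM.2.2 a a' b h h'
              · exact absurd ⟨a, hb' ▸ h⟩ hy
              · exact absurd ⟨a', hb ▸ h'⟩ hy
              · exact ha.trans ha'.symm
          have hp₀ : APath E M₀ l' x₁ :=
            apath_mod E M x y₀ y ⟨y₀, hm₀⟩ hp' hocc
          have hy₀un : ¬ ∃ a, M₀ a y₀ := by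
            rintro ⟨a, ⟨h, hne⟩ | ⟨ha, hb⟩⟩
            · exact hne ⟨hy₀uniq a h, rfl⟩
            · exact hyy₀ hb.symm
          have hlt : l'.length < n := by
            simp only [List.length_cons] at hlen
            omega
          obtain ⟨M', hM', hset⟩ :=
            ih l'.length hlt M₀ l' x₁ y₀ hM₀ hp₀ le_rfl he₀ hy₀un
          refine ⟨M', hM', ?_⟩
          rw [hset]
          have hS₀ : {b | ∃ a, M₀ a b} = insert y ({b | ∃ a, M a b} \ {y₀}) := by
            ext b
            simp only [hM₀def, Set.mem_setOf_eq, Set.mem_insert_iff, Set.mem_diff,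
              Set.mem_singleton_iff]
            constructor
            · rintro ⟨a, ⟨h, hne⟩ | ⟨ha, hb⟩⟩
              · refine Or.inr ⟨⟨a, h⟩, ?_⟩
                rintro rfl
                exact hne ⟨hy₀uniq a h, rfl⟩
              · exact Or.inl hb
            · rintro (rfl | ⟨⟨a, h⟩, hne⟩)
              · exact ⟨x, Or.inr ⟨rfl, rfl⟩⟩
              · exact ⟨a, Or.inl ⟨h, fun hc => hne hc.2⟩⟩
          rw [hS₀]
          have hy₀mem : y₀ ∈ {b : Y | ∃ a, M a b} := ⟨x, hm₀⟩
          ext b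
          simp only [Set.mem_insert_iff, Set.mem_diff, Set.mem_singleton_iff,
            Set.mem_setOf_eq]
          constructor
          · rintro (rfl | rfl | ⟨h, _⟩)
            · exact Or.inr hy₀mem
            · exact Or.inl rfl
            · exact Or.inr h
          · rintro (rfl | h)
            · exact Or.inr (Or.inl rfl)
            · by_cases hb : b = y₀
              · exact Or.inl hb
              · exact Or.inr (Or.inr ⟨h, hb⟩)

/-- If `|N(X)| ≥ |X| ≥ 1` and `M` is a maximum matching, and `X_S` is the
set of `X`-vertices reachable from the `M`-unmatched vertices by
`M`-alternating paths, then `X \ X_S` is nonempty. -/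
theorem stmt_3 {X Y : Type} [Fintype X] [Fintype Y]
    (E M : X → Y → Prop)
    (hX : 1 ≤ Fintype.card X)
    (hN : Fintype.card X ≤ Nat.card {y : Y // ∃ x, E x y})
    (hM : IsMatching E M)
    (hmax : ∀ M' : X → Y → Prop, IsMatching E M' →
      Nat.card {p : X × Y // M' p.1 p.2} ≤ Nat.card {p : X × Y // M p.1 p.2}) :
    ∃ x : X, ¬ AltReach E M x := by
  by_contra h
  push_neg at h
  by_cases hall : ∀ x, ∃ y, M x y
  · have : Nonempty X := Fintype.card_pos_iff.mp hX
    obtain ⟨x⟩ := this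
    exact no_reach hall x (h x)
  · push_neg at hall
    obtain ⟨x₀, hx₀⟩ := hall
    have hmatched : ∀ y : Y, (∃ x, E x y) → ∃ x, M x y := by
      rintro y ⟨x, hxy⟩
      by_contra hnm
      obtain ⟨l, hl⟩ := reach_path (h x)
      obtain ⟨M', hM', hset⟩ := aug E l.length M l x y hM hl le_rfl hxy hnm
      have hyS : y ∉ {b : Y | ∃ a, M a b} := hnm
      have hfin : {b : Y | ∃ a, M a b}.Finite := Set.toFinite _
      have hcard : Nat.card {b : Y // ∃ a, M' a b} =
          Nat.card {b : Y // ∃ a, M a b} + 1 := by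
        have h1 : Nat.card {b : Y // ∃ a, M' a b} = ({b : Y | ∃ a, M' a b}).ncard :=
          rfl
        have h2 : Nat.card {b : Y // ∃ a, M a b} = ({b : Y | ∃ a, M a b}).ncard :=
          rfl
        rw [h1, h2, hset, Set.ncard_insert_of_notMem hyS hfin]
      have hle := hmax M' hM'
      rw [card_matching E M' hM', card_matching E M hM, hcard] at hle
      omega
    classical
    have hg : Function.Injective
        (fun y : {y : Y // ∃ x, E x y} => (hmatched y.1 y.2).choose) := by
      intro a b hab
      have hab' : (hmatched a.1 a.2).choose = (hmatched b.1 b.2).choose := hab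
      have ha := (hmatched a.1 a.2).choose_spec
      have hb := (hmatched b.1 b.2).choose_spec
      exact Subtype.ext (hM.2.1 _ _ _ (hab' ▸ ha) hb)
    have hx₀r : x₀ ∉ Set.range
        (fun y : {y : Y // ∃ x, E x y} => (hmatched y.1 y.2).choose) := by
      rintro ⟨y, hy⟩
      exact hx₀ y.1 (hy ▸ (hmatched y.1 y.2).choose_spec)
    have hlt := Fintype.card_lt_of_injective_of_notMem _ hg hx₀r
    rw [Nat.card_eq_fintype_card] at hN
    omega
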